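/- For all real numbers $x, y$ with $0 < x \le y \le 1$ and all $\ell \in (0, 1]$, it holds that $\left(\frac{(1 - x^{1/\ell})^2}{x^2} - \frac{(1 - y^{1/\ell})^2}{y^2}\right)^2 \le \frac{y^2 - x^2}{\ell^2 x^4 y^2}$. -/

import Mathlib

lemma aux_deriv (c A t : ℝ) (ht : 0 < t) :
    HasDerivAt (fun u : ℝ => ((1 - u ^ c) ^ 2 + A) / u ^ 2)
      ((-(2 * c * (1 - t ^ c) * t ^ c * t) - ((1 - t ^ c) ^ 2 + A) * (2 * t)) / (t ^ 2) ^ 2) t := by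
  have h1 := Real.hasDerivAt_rpow_const (x := t) (p := c) (Or.inl ht.ne')
  have h2 := (h1.const_sub 1)
  have h3 := (h2.pow 2).add_const A
  have h4 := hasDerivAt_pow 2 t
  have h5 := h3.div h4 (by positivity)
  refine h5.congr_deriv ?_
  have hts : t ^ (c - 1) = t ^ c / t := by
    rw [Real.rpow_sub ht, Real.rpow_one]
  rw [hts]
  simp only [Pi.pow_apply]
  field_simp
  ring

lemma key (c x y : ℝ) (hc : 1 ≤ c) (hx : 0 < x) (hxy : x ≤ y) (hy : y ≤ 1) :
    |(1 - x ^ c) ^ 2 / x ^ 2 - (1 - y ^ c) ^ 2 / y ^ 2| ≤ c / x ^ 2 - c / y ^ 2 := by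
  have hy0 : 0 < y := lt_of_lt_of_le hx hxy
  have hcont : ∀ A : ℝ, ContinuousOn (fun u : ℝ => ((1 - u ^ c) ^ 2 + A) / u ^ 2)
      (Set.Icc x y) := by
    intro A
    intro t ht
    exact ((aux_deriv c A t (lt_of_lt_of_le hx ht.1)).continuousAt).continuousWithinAt
  have hsfacts : ∀ t ∈ Set.Ioo x y, 0 < t ∧ 0 ≤ t ^ c ∧ t ^ c ≤ 1 := by
    intro t ht
    have ht0 : 0 < t := lt_trans hx ht.1
    refine ⟨ht0, Real.rpow_nonneg ht0.le c, ?_⟩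
    exact Real.rpow_le_one ht0.le (le_trans ht.2.le hy) (le_trans zero_le_one hc)
  have hG : AntitoneOn (fun u : ℝ => ((1 - u ^ c) ^ 2 + c) / u ^ 2) (Set.Icc x y) := by
    apply antitoneOn_of_deriv_nonpos (convex_Icc x y) (hcont c) ?_ ?_ <;>
      intro t ht <;> rw [interior_Icc] at ht
    · exact ((aux_deriv c c t (lt_trans hx ht.1)).differentiableAt).differentiableWithinAt
    obtain ⟨ht0, hs0, hs1⟩ := hsfacts t ht
    rw [(aux_deriv c c t ht0).deriv]
    apply div_nonpos_of_nonpos_of_nonneg _ (by positivity)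
    have hc0 : (0:ℝ) < c := lt_of_lt_of_le one_pos hc
    nlinarith [mul_nonneg (mul_nonneg (mul_nonneg ht0.le hc0.le) (sub_nonneg.2 hs1)) hs0,
      mul_nonneg ht0.le (sq_nonneg (1 - t ^ c)), mul_pos ht0 hc0]
  have hH : MonotoneOn (fun u : ℝ => ((1 - u ^ c) ^ 2 + (-c)) / u ^ 2) (Set.Icc x y) := by
    apply monotoneOn_of_deriv_nonneg (convex_Icc x y) (hcont (-c)) ?_ ?_ <;>
      intro t ht <;> rw [interior_Icc] at ht
    · exact ((aux_deriv c (-c) t (lt_trans hx ht.1)).differentiableAt).differentiableWithinAt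
    obtain ⟨ht0, hs0, hs1⟩ := hsfacts t ht
    rw [(aux_deriv c (-c) t ht0).deriv]
    apply div_nonneg _ (by positivity)
    have h1 : (0:ℝ) ≤ 1 - t ^ c * (1 - t ^ c) := by nlinarith [sq_nonneg (1 - 2 * t ^ c)]
    nlinarith [mul_nonneg ht0.le (mul_nonneg (sub_nonneg.2 hc) h1),
      mul_nonneg ht0.le hs0]
  have hmem1 : x ∈ Set.Icc x y := ⟨le_refl x, hxy⟩
  have hmem2 : y ∈ Set.Icc x y := ⟨hxy, le_refl y⟩
  have e1 := hG hmem1 hmem2 hxy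
  have e2 := hH hmem1 hmem2 hxy
  simp only at e1 e2
  rw [add_div, add_div] at e1 e2
  rw [neg_div, neg_div] at e2
  rw [abs_le]
  constructor <;> linarith

theorem stmt6 (x y l : ℝ) (hx : 0 < x) (hxy : x ≤ y) (hy : y ≤ 1)
    (hl0 : 0 < l) (hl1 : l ≤ 1) :
    ((1 - x ^ (1 / l)) ^ 2 / x ^ 2 - (1 - y ^ (1 / l)) ^ 2 / y ^ 2) ^ 2 ≤
      (y ^ 2 - x ^ 2) / (l ^ 2 * x ^ 4 * y ^ 2) := by
  have hy0 : 0 < y := lt_of_lt_of_le hx hxy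
  have hc : (1:ℝ) ≤ 1 / l := by rw [le_div_iff₀ hl0]; linarith
  have habs := key (1 / l) x y hc hx hxy hy
  have hsq := sq_le_sq' (neg_le_of_abs_le habs) (le_of_abs_le habs)
  refine le_trans hsq ?_
  have hM : 1 / l / x ^ 2 - 1 / l / y ^ 2 = (y ^ 2 - x ^ 2) / (l * (x ^ 2 * y ^ 2)) := by
    field_simp
  rw [hM, div_pow, div_le_div_iff₀ (by positivity) (by positivity)]
  have h1 : 0 ≤ y ^ 2 - x ^ 2 := by nlinarith
  nlinarith [mul_nonneg (mul_nonneg h1 (sq_nonneg x)) (sq_nonneg (l * x * y)),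
    mul_nonneg (mul_nonneg (mul_nonneg h1 h1) (sq_nonneg (l * x * x))) (sq_nonneg (x * y))]
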